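/- arXiv:2110.11641 — 2 statements merged into one kernel-verified Lean document; each statement's English description precedes it below -/
import Mathlib

section
/- For a centered bivariate Gaussian (G_1, G_2), the conditional expectation of G_1 + G_2 given G_1 − G_2 equals [(Var(G_1) − Var(G_2))/Var(G_1 − G_2)] · (G_1 − G_2), assuming Var(G_1 − G_2) > 0. -/
open MeasureTheory ProbabilityTheory Matrix Real
open scoped NNReal ENNReal

/-- The standard Gaussian measure on `ι → ℝ` (i.i.d. standard normals). -/
noncomputable def stdGaussian (ι : Type*) [Fintype ι] : Measure (ι → ℝ) :=
  Measure.pi fun _ => gaussianReal 0 1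

/-- `μ` is the centered Gaussian measure on `ι → ℝ` with covariance matrix `C`:
it is the law of `A g` for `g` standard Gaussian and any matrix `A` with `A Aᵀ = C`. -/
def IsCenteredGaussian {ι : Type*} [Fintype ι] (C : Matrix ι ι ℝ)
    (μ : Measure (ι → ℝ)) : Prop :=
  ∃ A : Matrix ι ι ℝ, A * A.transpose = C ∧ μ = (stdGaussian ι).map A.mulVec

/-- Expectation of `f` under `μ`. -/
noncomputable def expec {α : Type*} [MeasurableSpace α] (μ : Measure α) (f : α → ℝ) : ℝ :=
  ∫ x, f x ∂μ

/-- Covariance of `f` and `g` under `μ`. -/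
noncomputable def covar {α : Type*} [MeasurableSpace α] (μ : Measure α) (f g : α → ℝ) : ℝ :=
  expec μ (fun x => f x * g x) - expec μ f * expec μ g

/-- Variance of `f` under `μ`. -/
noncomputable def variance' {α : Type*} [MeasurableSpace α] (μ : Measure α) (f : α → ℝ) : ℝ :=
  covar μ f f

namespace CondexpAux

local notation "γ" => gaussianReal (0 : ℝ) (1 : ℝ≥0)

noncomputable abbrev γprod : Measure (ℝ × ℝ) := Measure.prod (gaussianReal 0 1) (gaussianReal 0 1)

lemma gaussian_eq_withDensity : γ = (volume : Measure ℝ).withDensity (gaussianPDF 0 1) :=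
  gaussianReal_of_var_ne_zero 0 one_ne_zero

lemma integrable_id_gaussian : Integrable (fun x : ℝ => x) γ := by
  rw [gaussian_eq_withDensity,
    integrable_withDensity_iff_integrable_smul' (measurable_gaussianPDF 0 1)
      (Filter.Eventually.of_forall fun x => ENNReal.ofReal_lt_top)]
  have h : (fun x : ℝ => (gaussianPDF 0 1 x).toReal • x)
      = fun x : ℝ => (Real.sqrt (2 * π))⁻¹ * (x * Real.exp (-(1/2 : ℝ) * x ^ 2)) := by
    ext x
    rw [gaussianPDF, ENNReal.toReal_ofReal (gaussianPDFReal_nonneg _ _ _), gaussianPDFReal]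
    push_cast
    rw [smul_eq_mul]
    ring_nf
  rw [h]
  exact (integrable_mul_exp_neg_mul_sq (by norm_num : (0:ℝ) < 1/2)).const_mul _

lemma map_neg_gaussian : Measure.map (fun x : ℝ => (-1 : ℝ) * x) γ = γ := by
  rw [gaussianReal_map_const_mul]
  norm_num

lemma integral_id_gaussian : ∫ x, x ∂γ = 0 := by
  have h : ∫ x, x ∂γ = ∫ x, (-1 : ℝ) * x ∂γ := by
    nth_rewrite 1 [← map_neg_gaussian]
    exact integral_map (f := fun x : ℝ => x) (by fun_prop) aestronglyMeasurable_id
  have := h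
  rw [integral_const_mul] at this
  linarith

/-- The standard Gaussian on `Fin 2 → ℝ` as a density w.r.t. Lebesgue. -/
lemma stdGaussian_two_eq :
    stdGaussian (Fin 2) = (volume : Measure (Fin 2 → ℝ)).withDensity
      (fun x => gaussianPDF 0 1 (x 0) * gaussianPDF 0 1 (x 1)) := by
  refine Measure.pi_eq (μ := fun _ : Fin 2 => gaussianReal 0 1) fun s hs => ?_
  have hmeas : MeasurableSet (Set.univ.pi s) := MeasurableSet.univ_pi fun i => hs i
  rw [withDensity_apply _ hmeas]
  have hvp := (volume_preserving_finTwoArrow ℝ).symm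
  have hpre : (MeasurableEquiv.finTwoArrow (α := ℝ)).symm ⁻¹' (Set.univ.pi s)
      = (s 0) ×ˢ (s 1) := by
    ext p
    simp [MeasurableEquiv.finTwoArrow, MeasurableEquiv.piFinTwo, Fin.forall_fin_two]
  have hfmeas : Measurable fun x : Fin 2 → ℝ =>
      gaussianPDF 0 1 (x 0) * gaussianPDF 0 1 (x 1) := by
    exact ((measurable_gaussianPDF 0 1).comp (measurable_pi_apply 0)).mul
      ((measurable_gaussianPDF 0 1).comp (measurable_pi_apply 1))
  rw [← hvp.setLIntegral_comp_preimage hmeas hfmeas, hpre]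
  have hind : ∀ p : ℝ × ℝ,
      ((s 0) ×ˢ (s 1)).indicator
        (fun p : ℝ × ℝ => gaussianPDF 0 1 p.1 * gaussianPDF 0 1 p.2) p
      = (s 0).indicator (gaussianPDF 0 1) p.1 * (s 1).indicator (gaussianPDF 0 1) p.2 := by
    intro p
    by_cases h0 : p.1 ∈ s 0 <;> by_cases h1 : p.2 ∈ s 1 <;>
      simp [Set.indicator, Set.mem_prod, h0, h1]
  have hlhs : ∫⁻ p in (s 0) ×ˢ (s 1),
      gaussianPDF 0 1 ((MeasurableEquiv.finTwoArrow (α := ℝ)).symm p 0)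
        * gaussianPDF 0 1 ((MeasurableEquiv.finTwoArrow (α := ℝ)).symm p 1) ∂(volume : Measure (ℝ × ℝ))
      = ∫⁻ p in (s 0) ×ˢ (s 1),
          gaussianPDF 0 1 p.1 * gaussianPDF 0 1 p.2 ∂(volume : Measure (ℝ × ℝ)) := by
    refine lintegral_congr fun p => ?_
    simp [MeasurableEquiv.finTwoArrow, MeasurableEquiv.piFinTwo]
  rw [hlhs, ← lintegral_indicator ((hs 0).prod (hs 1))]
  simp_rw [hind]
  rw [Measure.volume_eq_prod, lintegral_prod_mul ((measurable_gaussianPDF 0 1).indicator (hs 0)).aemeasurable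
    ((measurable_gaussianPDF 0 1).indicator (hs 1)).aemeasurable]
  rw [lintegral_indicator (hs 0), lintegral_indicator (hs 1)]
  rw [Fin.prod_univ_two]
  rw [gaussianReal_apply 0 one_ne_zero (s 0), gaussianReal_apply 0 one_ne_zero (s 1)]

lemma pdf_prod_eq (a b : ℝ) : gaussianPDFReal 0 1 a * gaussianPDFReal 0 1 b
    = ((Real.sqrt (2 * π))⁻¹) ^ 2 * Real.exp (-(a ^ 2 + b ^ 2) / 2) := by
  simp only [gaussianPDFReal]
  rw [mul_mul_mul_comm, ← Real.exp_add]
  push_cast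
  norm_num
  rw [sq]
  ring_nf

/-- Rotation invariance of the 2-dimensional standard Gaussian. -/
lemma stdGaussian_map_orth (M : Matrix (Fin 2) (Fin 2) ℝ) (hM : M * Mᵀ = 1) :
    (stdGaussian (Fin 2)).map M.mulVec = stdGaussian (Fin 2) := by
  have hMtM : Mᵀ * M = 1 := mul_eq_one_comm.mp hM
  have hdet : M.det * M.det = 1 := by
    have h := congrArg Matrix.det hM
    rwa [Matrix.det_mul, Matrix.det_transpose, Matrix.det_one] at h
  have hdetL : LinearMap.det (Matrix.toLin' M) = M.det := LinearMap.det_toLin' M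
  have hdet1 : M.det = 1 ∨ M.det = -1 := mul_self_eq_one_iff.mp hdet
  have hdetne : LinearMap.det (Matrix.toLin' M) ≠ 0 := by
    rw [hdetL]; rcases hdet1 with h | h <;> rw [h] <;> norm_num
  have hcoe : ⇑(Matrix.toLin' M) = M.mulVec := by
    funext x; exact Matrix.toLin'_apply M x
  have hTmeas : Measurable (M.mulVec (α := ℝ)) := by
    rw [← hcoe]
    exact (LinearMap.continuous_of_finiteDimensional (Matrix.toLin' M)).measurable
  have hvol : Measure.map M.mulVec (volume : Measure (Fin 2 → ℝ)) = volume := by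
    have h := Real.map_linearMap_volume_pi_eq_smul_volume_pi hdetne
    rw [hcoe] at h
    rw [h, hdetL]
    rcases hdet1 with hd | hd <;> rw [hd] <;> norm_num
  -- pointwise invariance of the density
  have hdens : ∀ x : Fin 2 → ℝ,
      gaussianPDF 0 1 (M.mulVec x 0) * gaussianPDF 0 1 (M.mulVec x 1)
        = gaussianPDF 0 1 (x 0) * gaussianPDF 0 1 (x 1) := by
    intro x
    have h00 := congrFun (congrFun hMtM 0) 0
    have h01 := congrFun (congrFun hMtM 0) 1
    have h11 := congrFun (congrFun hMtM 1) 1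
    simp [Matrix.mul_apply, Fin.sum_univ_two, Matrix.transpose_apply, Matrix.one_apply] at h00 h01 h11
    have key : (M.mulVec x 0) ^ 2 + (M.mulVec x 1) ^ 2 = (x 0) ^ 2 + (x 1) ^ 2 := by
      simp only [Matrix.mulVec, dotProduct, Fin.sum_univ_two]
      linear_combination (x 0)^2 * h00 + (x 1)^2 * h11 + 2 * (x 0) * (x 1) * h01
    simp only [gaussianPDF, ← ENNReal.ofReal_mul (gaussianPDFReal_nonneg _ _ _)]
    rw [pdf_prod_eq, pdf_prod_eq, key]
  rw [stdGaussian_two_eq]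
  have hfmeas : Measurable fun x : Fin 2 → ℝ =>
      gaussianPDF 0 1 (x 0) * gaussianPDF 0 1 (x 1) :=
    ((measurable_gaussianPDF 0 1).comp (measurable_pi_apply 0)).mul
      ((measurable_gaussianPDF 0 1).comp (measurable_pi_apply 1))
  ext s hs
  rw [Measure.map_apply hTmeas hs, withDensity_apply _ (hTmeas hs), withDensity_apply _ hs]
  conv_rhs => rw [← hvol]
  rw [setLIntegral_map hs hfmeas hTmeas]
  exact lintegral_congr fun x => (hdens x).symm

lemma isProb_stdGaussian : IsProbabilityMeasure (stdGaussian (Fin 2)) := by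
  unfold _root_.stdGaussian; infer_instance

lemma measurePreserving_e :
    MeasurePreserving (MeasurableEquiv.finTwoArrow (α := ℝ)) (stdGaussian (Fin 2)) (γprod) :=
  measurePreserving_finTwoArrow γ

lemma integrable_eval (i : Fin 2) :
    Integrable (fun g : Fin 2 → ℝ => g i) (stdGaussian (Fin 2)) := by
  have h1 : Integrable (fun p : ℝ × ℝ => p.1) (γprod) := by
    have hm : Measure.map Prod.fst (γprod) = gaussianReal 0 1 := by
      rw [← Measure.fst]; exact Measure.fst_prod
    exact Integrable.comp_measurable (f := Prod.fst) (g := fun x : ℝ => x)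
      (by rw [hm]; exact integrable_id_gaussian) measurable_fst
  have h2 : Integrable (fun p : ℝ × ℝ => p.2) (γprod) := by
    have hm : Measure.map Prod.snd (γprod) = gaussianReal 0 1 := by
      rw [← Measure.snd]; exact Measure.snd_prod
    exact Integrable.comp_measurable (f := Prod.snd) (g := fun x : ℝ => x)
      (by rw [hm]; exact integrable_id_gaussian) measurable_snd
  fin_cases i
  · exact (measurePreserving_e.integrable_comp_emb
      (MeasurableEquiv.finTwoArrow (α := ℝ)).measurableEmbedding).mpr h1
  · exact (measurePreserving_e.integrable_comp_emb
      (MeasurableEquiv.finTwoArrow (α := ℝ)).measurableEmbedding).mpr h2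

/-- Key orthogonality lemma: the integral of `u⊥ ⬝ g` over the event `{u ⬝ g ∈ B}` vanishes. -/
lemma key_integral_zero (u : Fin 2 → ℝ) (hu : 0 < u 0 ^ 2 + u 1 ^ 2)
    {B : Set ℝ} (hB : MeasurableSet B) :
    ∫ g in (fun g : Fin 2 → ℝ => u 0 * g 0 + u 1 * g 1) ⁻¹' B,
      (-(u 1) * g 0 + u 0 * g 1) ∂(stdGaussian (Fin 2)) = 0 := by
  set r : ℝ := Real.sqrt (u 0 ^ 2 + u 1 ^ 2) with hr
  have hrpos : 0 < r := Real.sqrt_pos.mpr hu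
  have hr2 : r ^ 2 = u 0 ^ 2 + u 1 ^ 2 := Real.sq_sqrt hu.le
  have hrne : r ≠ 0 := hrpos.ne'
  set M : Matrix (Fin 2) (Fin 2) ℝ := !![u 0 / r, u 1 / r; -(u 1) / r, u 0 / r] with hMdef
  have hM : M * Mᵀ = 1 := by
    ext i j
    fin_cases i <;> fin_cases j <;>
        simp only [hMdef, Matrix.mul_apply, Fin.sum_univ_two, Matrix.one_apply,
          Matrix.transpose_apply, Matrix.cons_val', Matrix.cons_val_zero, Matrix.cons_val_one,
          Matrix.head_cons, Matrix.head_fin_const, Matrix.empty_val', Matrix.cons_val_fin_one,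
          Fin.mk_zero, Fin.mk_one, Matrix.of_apply, if_true, if_false] <;>
      norm_num <;> field_simp <;> linarith [hr2]
  have hmap := stdGaussian_map_orth M hM
  have hcoe : ⇑(Matrix.toLin' M) = M.mulVec := by
    funext x; exact Matrix.toLin'_apply M x
  have hTmeas : Measurable (M.mulVec (α := ℝ)) := by
    rw [← hcoe]
    exact (LinearMap.continuous_of_finiteDimensional (Matrix.toLin' M)).measurable
  -- the function F on Fin 2 → ℝ
  set F : (Fin 2 → ℝ) → ℝ :=
    fun h => B.indicator (fun _ => (1 : ℝ)) (r * h 0) * (r * h 1) with hF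
  have hFmeas : Measurable F := by
    rw [hF]
    have hm1 : Measurable fun h : Fin 2 → ℝ => B.indicator (fun _ => (1 : ℝ)) (r * h 0) :=
      (measurable_const.indicator hB).comp (show Measurable fun h : Fin 2 → ℝ => r * h 0 from
        (measurable_pi_apply (X := fun _ : Fin 2 => ℝ) 0).const_mul r)
    exact hm1.mul ((measurable_pi_apply (X := fun _ : Fin 2 => ℝ) 1).const_mul r)
  have hcomp : ∀ g : Fin 2 → ℝ, F (M.mulVec g)
      = B.indicator (fun _ => (1 : ℝ)) (u 0 * g 0 + u 1 * g 1) * (-(u 1) * g 0 + u 0 * g 1) := by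
    intro g
    have h0 : r * (M.mulVec g 0) = u 0 * g 0 + u 1 * g 1 := by
      simp only [hMdef, Matrix.mulVec, dotProduct, Fin.sum_univ_two,
        Matrix.cons_val', Matrix.cons_val_zero, Matrix.cons_val_one, Matrix.head_cons,
        Matrix.of_apply, Matrix.empty_val', Matrix.cons_val_fin_one]
      field_simp
      try ring
    have h1 : r * (M.mulVec g 1) = -(u 1) * g 0 + u 0 * g 1 := by
      simp only [hMdef, Matrix.mulVec, dotProduct, Fin.sum_univ_two,
        Matrix.cons_val', Matrix.cons_val_zero, Matrix.cons_val_one, Matrix.head_cons,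
        Matrix.of_apply, Matrix.empty_val', Matrix.cons_val_fin_one]
      field_simp
      try ring
    rw [hF]
    simp only
    rw [h0, h1]
  -- rewrite the set integral as an integral of F ∘ mulVec
  have hset : ∫ g in (fun g : Fin 2 → ℝ => u 0 * g 0 + u 1 * g 1) ⁻¹' B,
      (-(u 1) * g 0 + u 0 * g 1) ∂(stdGaussian (Fin 2))
      = ∫ g, F (M.mulVec g) ∂(stdGaussian (Fin 2)) := by
    have hUmeas : Measurable fun g : Fin 2 → ℝ => u 0 * g 0 + u 1 * g 1 := by
      exact ((measurable_pi_apply 0).const_mul _).add ((measurable_pi_apply 1).const_mul _)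
    rw [← integral_indicator (hUmeas hB)]
    refine integral_congr_ae (Filter.Eventually.of_forall fun g => ?_)
    show ((fun g : Fin 2 → ℝ => u 0 * g 0 + u 1 * g 1) ⁻¹' B).indicator
      (fun g => -(u 1) * g 0 + u 0 * g 1) g = F (M.mulVec g)
    rw [hcomp g]
    by_cases hg : u 0 * g 0 + u 1 * g 1 ∈ B
    · simp [Set.indicator_of_mem, hg]
    · simp [Set.indicator_of_notMem, hg]
  rw [hset]
  have hmapint : ∫ g, F (M.mulVec g) ∂(stdGaussian (Fin 2))
      = ∫ h, F h ∂(stdGaussian (Fin 2)) := by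
    conv_rhs => rw [← hmap]
    rw [integral_map hTmeas.aemeasurable]
    · rw [hmap]
      exact hFmeas.aestronglyMeasurable
  rw [hmapint]
  -- compute via the product measure
  set G : ℝ × ℝ → ℝ :=
    fun p => B.indicator (fun _ => (1 : ℝ)) (r * p.1) * (r * p.2) with hG
  have hGF : ∀ x : Fin 2 → ℝ, G (MeasurableEquiv.finTwoArrow (α := ℝ) x) = F x := by
    intro x; rfl
  have htrans : ∫ h, F h ∂(stdGaussian (Fin 2)) = ∫ p, G p ∂(γprod) := by
    rw [← measurePreserving_e.integral_comp
      (MeasurableEquiv.finTwoArrow (α := ℝ)).measurableEmbedding]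
    exact integral_congr_ae (Filter.Eventually.of_forall fun x => hGF x)
  rw [htrans, hG]
  rw [integral_prod_mul (f := fun x : ℝ => B.indicator (fun _ => (1 : ℝ)) (r * x))
    (g := fun y : ℝ => r * y)]
  have : ∫ y, r * y ∂γ = 0 := by
    rw [integral_const_mul, integral_id_gaussian, mul_zero]
  rw [this, mul_zero]

end CondexpAux

open CondexpAux in
theorem condexp_sum_given_difference (C : Matrix (Fin 2) (Fin 2) ℝ)
    (μ : Measure (Fin 2 → ℝ)) (hμ : IsCenteredGaussian C μ)
    (hvar : 0 < C 0 0 + C 1 1 - 2 * C 0 1) :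
    μ[(fun z => z 0 + z 1) |
        MeasurableSpace.comap (fun z => z 0 - z 1) (borel ℝ)]
      =ᵐ[μ]
    fun z => (C 0 0 - C 1 1) / (C 0 0 + C 1 1 - 2 * C 0 1) * (z 0 - z 1) := by
  obtain ⟨A, hA, hmapμ⟩ := hμ
  have hprob : IsProbabilityMeasure (stdGaussian (Fin 2)) := isProb_stdGaussian
  set T := A.mulVec with hTdef
  have hcoe : ⇑(Matrix.toLin' A) = T := by funext x; exact Matrix.toLin'_apply A x
  have hTmeas : Measurable T := by
    rw [← hcoe]; exact (LinearMap.continuous_of_finiteDimensional _).measurable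
  have hμprob : IsProbabilityMeasure μ := by
    rw [hmapμ]; exact Measure.isProbabilityMeasure_map hTmeas.aemeasurable
  -- covariance entries
  have hC00 : C 0 0 = A 0 0 ^ 2 + A 0 1 ^ 2 := by
    rw [← hA]; simp [Matrix.mul_apply, Fin.sum_univ_two, Matrix.transpose_apply]; ring
  have hC11 : C 1 1 = A 1 0 ^ 2 + A 1 1 ^ 2 := by
    rw [← hA]; simp [Matrix.mul_apply, Fin.sum_univ_two, Matrix.transpose_apply]; ring
  have hC01 : C 0 1 = A 0 0 * A 1 0 + A 0 1 * A 1 1 := by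
    rw [← hA]; simp [Matrix.mul_apply, Fin.sum_univ_two, Matrix.transpose_apply]
  set u0 : ℝ := A 0 0 - A 1 0 with hu0
  set u1 : ℝ := A 0 1 - A 1 1 with hu1
  set w0 : ℝ := A 0 0 + A 1 0 with hw0def
  set w1 : ℝ := A 0 1 + A 1 1 with hw1def
  set V : ℝ := C 0 0 + C 1 1 - 2 * C 0 1 with hVdef
  have hVu : V = u0 ^ 2 + u1 ^ 2 := by rw [hVdef, hC00, hC11, hC01, hu0, hu1]; ring
  have hVpos : 0 < V := hvar
  have hupos : 0 < u0 ^ 2 + u1 ^ 2 := hVu ▸ hVpos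
  set c : ℝ := (C 0 0 - C 1 1) / V with hc
  set t : ℝ := (u0 * w1 - u1 * w0) / V with ht
  have hdiff : C 0 0 - C 1 1 = u0 * w0 + u1 * w1 := by
    rw [hC00, hC11, hu0, hu1, hw0def, hw1def]; ring
  have hw0' : w0 = c * u0 - t * u1 := by
    rw [hc, ht, hdiff]
    field_simp
    linear_combination w0 * hVu
  have hw1' : w1 = c * u1 + t * u0 := by
    rw [hc, ht, hdiff]
    field_simp
    linear_combination w1 * hVu
  -- the sub-σ-algebra
  set D : (Fin 2 → ℝ) → ℝ := fun z => z 0 - z 1 with hD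
  have hS0 : Measurable fun z : Fin 2 → ℝ => z 0 := measurable_pi_apply 0
  have hS1 : Measurable fun z : Fin 2 → ℝ => z 1 := measurable_pi_apply 1
  have hDmeas : Measurable D := hS0.sub hS1
  have hm : MeasurableSpace.comap D (borel ℝ) ≤
      (MeasurableSpace.pi : MeasurableSpace (Fin 2 → ℝ)) :=
    hDmeas.comap_le
  haveI : SigmaFinite (μ.trim hm) := by
    haveI : IsFiniteMeasure (μ.trim hm) := isFiniteMeasure_trim hm
    infer_instance
  -- compositions with T
  have hST : ∀ g : Fin 2 → ℝ, (T g) 0 + (T g) 1 = w0 * g 0 + w1 * g 1 := by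
    intro g
    simp only [hTdef, Matrix.mulVec, dotProduct, Fin.sum_univ_two, hw0def, hw1def]
    ring
  have hDT : ∀ g : Fin 2 → ℝ, D (T g) = u0 * g 0 + u1 * g 1 := by
    intro g
    simp only [hD, hTdef, Matrix.mulVec, dotProduct, Fin.sum_univ_two, hu0, hu1]
    ring
  have hUint : Integrable (fun g : Fin 2 → ℝ => u0 * g 0 + u1 * g 1) (stdGaussian (Fin 2)) :=
    ((integrable_eval 0).const_mul u0).add ((integrable_eval 1).const_mul u1)
  have hWint : Integrable (fun g : Fin 2 → ℝ => w0 * g 0 + w1 * g 1) (stdGaussian (Fin 2)) :=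
    ((integrable_eval 0).const_mul w0).add ((integrable_eval 1).const_mul w1)
  have hPint : Integrable (fun g : Fin 2 → ℝ => -u1 * g 0 + u0 * g 1) (stdGaussian (Fin 2)) :=
    ((integrable_eval 0).const_mul (-u1)).add ((integrable_eval 1).const_mul u0)
  have hSmeas : Measurable fun z : Fin 2 → ℝ => z 0 + z 1 := hS0.add hS1
  have hS_int : Integrable (fun z : Fin 2 → ℝ => z 0 + z 1) μ := by
    rw [hmapμ]
    refine (integrable_map_measure hSmeas.aestronglyMeasurable hTmeas.aemeasurable).mpr ?_
    exact hWint.congr (Filter.Eventually.of_forall fun g => (hST g).symm)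
  have hf_int : Integrable (fun z : Fin 2 → ℝ => c * D z) μ := by
    rw [hmapμ]
    refine (integrable_map_measure ((hDmeas.const_mul c).aestronglyMeasurable)
      hTmeas.aemeasurable).mpr ?_
    exact (hUint.const_mul c).congr
      (Filter.Eventually.of_forall fun g => by show c * _ = c * D (T g); rw [hDT g])
  -- m-measurability of the candidate
  have hDm : Measurable[MeasurableSpace.comap D (borel ℝ)] D :=
    measurable_iff_comap_le.mpr le_rfl
  have hf_measm : AEStronglyMeasurable[MeasurableSpace.comap D (borel ℝ)]
      (fun z : Fin 2 → ℝ => c * D z) μ :=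
    StronglyMeasurable.aestronglyMeasurable (Measurable.stronglyMeasurable (hDm.const_mul c))
  -- the set-integral identity
  have hf_eq : ∀ s : Set (Fin 2 → ℝ), MeasurableSet[MeasurableSpace.comap D (borel ℝ)] s →
      μ s < ⊤ → ∫ z in s, c * D z ∂μ = ∫ z in s, (z 0 + z 1) ∂μ := by
    rintro s hs -
    obtain ⟨B, hB', rfl⟩ := hs
    have hB : MeasurableSet B := hB'
    have hpre : T ⁻¹' (D ⁻¹' B) = (fun g : Fin 2 → ℝ => u0 * g 0 + u1 * g 1) ⁻¹' B := by
      ext g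
      simp only [Set.mem_preimage]
      rw [hDT g]
    have hsmeas : MeasurableSet (D ⁻¹' B) := hDmeas hB
    have hLHS : ∫ z in D ⁻¹' B, c * D z ∂μ
        = c * ∫ g in (fun g : Fin 2 → ℝ => u0 * g 0 + u1 * g 1) ⁻¹' B,
            (u0 * g 0 + u1 * g 1) ∂(stdGaussian (Fin 2)) := by
      rw [hmapμ, setIntegral_map hsmeas ((hDmeas.const_mul c).aestronglyMeasurable)
        hTmeas.aemeasurable, hpre, ← integral_const_mul]
      exact integral_congr_ae (Filter.Eventually.of_forall fun g => by
        show c * D (T g) = c * (u0 * g 0 + u1 * g 1); rw [hDT g])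
    have hRHS : ∫ z in D ⁻¹' B, (z 0 + z 1) ∂μ
        = ∫ g in (fun g : Fin 2 → ℝ => u0 * g 0 + u1 * g 1) ⁻¹' B,
            (w0 * g 0 + w1 * g 1) ∂(stdGaussian (Fin 2)) := by
      rw [hmapμ, setIntegral_map hsmeas hSmeas.aestronglyMeasurable hTmeas.aemeasurable, hpre]
      exact integral_congr_ae (Filter.Eventually.of_forall fun g => hST g)
    have hsplit : ∫ g in (fun g : Fin 2 → ℝ => u0 * g 0 + u1 * g 1) ⁻¹' B,
            (w0 * g 0 + w1 * g 1) ∂(stdGaussian (Fin 2))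
        = c * ∫ g in (fun g : Fin 2 → ℝ => u0 * g 0 + u1 * g 1) ⁻¹' B,
              (u0 * g 0 + u1 * g 1) ∂(stdGaussian (Fin 2))
          + t * ∫ g in (fun g : Fin 2 → ℝ => u0 * g 0 + u1 * g 1) ⁻¹' B,
              (-u1 * g 0 + u0 * g 1) ∂(stdGaussian (Fin 2)) := by
      rw [← integral_const_mul, ← integral_const_mul,
        ← integral_add ((hUint.const_mul c).restrict) ((hPint.const_mul t).restrict)]
      exact integral_congr_ae (Filter.Eventually.of_forall fun g => by
        rw [hw0', hw1']; ring)
    have hkey := key_integral_zero ![u0, u1] (by simpa using hupos) hB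
    simp only [Matrix.cons_val_zero, Matrix.cons_val_one, Matrix.head_cons] at hkey
    rw [hLHS, hRHS, hsplit, hkey, mul_zero, add_zero]
  exact (ae_eq_condExp_of_forall_setIntegral_eq hm hS_int
    (fun s _ _ => hf_int.integrableOn) hf_eq hf_measm).symm
end

section
/- For N = 2 and any centered bivariate Gaussian G, Cov(log S_2(G), p_1(G) p_2(G)) ≤ 0, where S_2(x) = e^{β x_1} + e^{β x_2} and p_i(x) = e^{β x_i}/S_2(x), for every β > 0. -/
open MeasureTheory ProbabilityTheory Matrix Real

noncomputable def S {N : ℕ} (β : ℝ) (x : Fin N → ℝ) : ℝ :=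
  ∑ i, Real.exp (β * x i)

noncomputable def p {N : ℕ} (β : ℝ) (i : Fin N) (x : Fin N → ℝ) : ℝ :=
  Real.exp (β * x i) / S β x

/-! ### Auxiliary lemmas -/

section Aux

lemma S_eval (β : ℝ) (x : Fin 2 → ℝ) :
    S β x = Real.exp (β * x 0) + Real.exp (β * x 1) := by
  simp [S, Fin.sum_univ_two]

lemma S_pos (β : ℝ) (x : Fin 2 → ℝ) : 0 < S β x := by
  rw [S_eval]; positivity

lemma continuous_S (β : ℝ) : Continuous (S (N := 2) β) := by
  have : Continuous fun x : Fin 2 → ℝ => Real.exp (β * x 0) + Real.exp (β * x 1) := by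
    fun_prop
  exact (funext (S_eval β) : S (N := 2) β = _) ▸ this

lemma continuous_logS (β : ℝ) : Continuous (fun x : Fin 2 → ℝ => Real.log (S β x)) :=
  (continuous_S β).log fun x => (S_pos β x).ne'

/-- Key algebraic identity: `p 0 * p 1 = exp (-(log S(x) + log S(-x)))`. -/
lemma H_eq (β : ℝ) (x : Fin 2 → ℝ) :
    p β 0 x * p β 1 x = Real.exp (-(Real.log (S β x) + Real.log (S β (-x)))) := by
  have hx := S_pos β x
  have hnx := S_pos β (-x)
  rw [Real.exp_neg, Real.exp_add, Real.exp_log hx, Real.exp_log hnx, p, p]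
  rw [S_eval β x, S_eval β (-x)]
  have h0 : β * (-x) 0 = -(β * x 0) := by simp
  have h1 : β * (-x) 1 = -(β * x 1) := by simp
  rw [h0, h1, Real.exp_neg, Real.exp_neg]
  set a := Real.exp (β * x 0) with ha
  set b := Real.exp (β * x 1) with hb
  have hap : 0 < a := Real.exp_pos _
  have hbp : 0 < b := Real.exp_pos _
  field_simp
  ring_nf

lemma one_le_SS (β : ℝ) (x : Fin 2 → ℝ) : 1 ≤ S β x * S β (-x) := by
  rw [S_eval β x, S_eval β (-x)]
  have h0 : β * (-x) 0 = -(β * x 0) := by simp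
  have h1 : β * (-x) 1 = -(β * x 1) := by simp
  rw [h0, h1, Real.exp_neg, Real.exp_neg]
  set a := Real.exp (β * x 0) with ha
  set b := Real.exp (β * x 1) with hb
  have hap : 0 < a := Real.exp_pos _
  have hbp : 0 < b := Real.exp_pos _
  have hexp : (a + b) * (a⁻¹ + b⁻¹) = 2 + a / b + b / a := by
    field_simp
    ring
  rw [hexp]
  have h2 : 0 < a / b := by positivity
  have h3 : 0 < b / a := by positivity
  linarith

lemma abs_logS_le {β : ℝ} (hβ : 0 < β) (x : Fin 2 → ℝ) :
    |Real.log (S β x)| ≤ β * |x 0| + β * |x 1| + Real.log 2 := by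
  have h2 : (0:ℝ) < Real.log 2 := Real.log_pos one_lt_two
  have hx := S_pos β x
  have hnn0 : 0 ≤ β * |x 0| := mul_nonneg hβ.le (abs_nonneg _)
  have hnn1 : 0 ≤ β * |x 1| := mul_nonneg hβ.le (abs_nonneg _)
  rw [abs_le]
  constructor
  · have hle : Real.exp (β * x 0) ≤ S β x := by
      rw [S_eval]; linarith [Real.exp_pos (β * x 1)]
    have hl : β * x 0 ≤ Real.log (S β x) := by
      calc β * x 0 = Real.log (Real.exp (β * x 0)) := (Real.log_exp _).symm
        _ ≤ _ := Real.log_le_log (Real.exp_pos _) hle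
    have hax : -(β * |x 0|) ≤ β * x 0 := by
      have := neg_abs_le (x 0)
      nlinarith
    linarith
  · have hb : S β x ≤ 2 * Real.exp (β * |x 0| + β * |x 1|) := by
      rw [S_eval]
      have ha1 : Real.exp (β * x 0) ≤ Real.exp (β * |x 0| + β * |x 1|) := by
        apply Real.exp_le_exp.mpr
        have := le_abs_self (x 0)
        nlinarith
      have ha2 : Real.exp (β * x 1) ≤ Real.exp (β * |x 0| + β * |x 1|) := by
        apply Real.exp_le_exp.mpr
        have := le_abs_self (x 1)
        nlinarith
      linarith
    calc Real.log (S β x) ≤ Real.log (2 * Real.exp (β * |x 0| + β * |x 1|)) :=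
          Real.log_le_log hx hb
      _ = Real.log 2 + (β * |x 0| + β * |x 1|) := by
          rw [Real.log_mul two_ne_zero (Real.exp_ne_zero _), Real.log_exp]
      _ ≤ β * |x 0| + β * |x 1| + Real.log 2 := by linarith

lemma gauss_neg_mp : MeasurePreserving (fun x : ℝ => -x) (gaussianReal 0 1) (gaussianReal 0 1) := by
  refine ⟨measurable_neg, ?_⟩
  have h := gaussianReal_map_const_mul (μ := 0) (v := 1) (-1)
  simp only [neg_one_mul, mul_zero] at h
  rw [h]
  congr 1
  ext
  norm_num

lemma std_neg_mp :
    MeasurePreserving (fun y : Fin 2 → ℝ => -y) (stdGaussian (Fin 2)) (stdGaussian (Fin 2)) :=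
  MeasureTheory.measurePreserving_pi (fun _ : Fin 2 => gaussianReal 0 1)
    (fun _ : Fin 2 => gaussianReal 0 1) (fun _ => gauss_neg_mp)

instance : IsProbabilityMeasure (stdGaussian (Fin 2)) := by
  unfold _root_.stdGaussian; infer_instance

lemma int_abs_gauss : Integrable (fun x : ℝ => |x|) (gaussianReal 0 1) := by
  rw [gaussianReal_of_var_ne_zero _ one_ne_zero,
    integrable_withDensity_iff (measurable_gaussianPDF 0 1)
      (ae_of_all _ fun x => ENNReal.ofReal_lt_top)]
  have h1 : Integrable (fun x : ℝ => x ^ (1:ℝ) * Real.exp (-(1/2) * x ^ 2)) :=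
    integrable_rpow_mul_exp_neg_mul_sq (by norm_num) (by norm_num)
  simp only [Real.rpow_one] at h1
  have h2 := (h1.abs.const_mul ((√(2 * π))⁻¹))
  refine h2.mono' ?_ ?_
  · apply Measurable.aestronglyMeasurable
    exact measurable_abs.mul (measurable_gaussianPDF 0 1).ennreal_toReal
  · refine ae_of_all _ fun x => ?_
    have hpdf : (gaussianPDF 0 1 x).toReal = gaussianPDFReal 0 1 x :=
      ENNReal.toReal_ofReal (gaussianPDFReal_nonneg 0 1 x)
    rw [Real.norm_eq_abs, hpdf, gaussianPDFReal]
    simp only [NNReal.coe_one, mul_one, sub_zero]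
    have hs : (0:ℝ) ≤ (√(2*π))⁻¹ := inv_nonneg.mpr (Real.sqrt_nonneg _)
    have he : Real.exp (-x ^ 2 / 2) = Real.exp (-(1/2) * x ^ 2) := by ring_nf
    rw [he, abs_mul, abs_abs, abs_mul, abs_of_nonneg hs,
      abs_of_nonneg (Real.exp_pos _).le, abs_mul, abs_of_nonneg (Real.exp_pos _).le]
    ring_nf
    exact le_refl _

lemma map_eval_std (j : Fin 2) :
    (stdGaussian (Fin 2)).map (fun y => y j) = gaussianReal 0 1 := by
  refine Measure.ext fun s hs => ?_
  rw [Measure.map_apply (measurable_pi_apply j) hs]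
  have hpre : (fun y : Fin 2 → ℝ => y j) ⁻¹' s
      = Set.pi Set.univ (Function.update (fun _ => Set.univ) j s) := by
    rw [Set.eval_preimage]
  rw [hpre, _root_.stdGaussian, Measure.pi_pi]
  fin_cases j <;> simp [Fin.prod_univ_two, Function.update]

lemma int_coord (f : ℝ → ℝ) (hf : Measurable f) (hint : Integrable f (gaussianReal 0 1))
    (j : Fin 2) : Integrable (fun y : Fin 2 → ℝ => f (y j)) (stdGaussian (Fin 2)) := by
  have h2 : Integrable f ((stdGaussian (Fin 2)).map (fun y => y j)) := by
    rw [map_eval_std j]; exact hint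
  exact (integrable_map_measure hf.aestronglyMeasurable
    (measurable_pi_apply j).aemeasurable).mp h2

lemma measurable_mulVec (A : Matrix (Fin 2) (Fin 2) ℝ) : Measurable A.mulVec := by
  apply measurable_pi_lambda
  intro i
  simp only [Matrix.mulVec, dotProduct]
  exact Finset.measurable_sum _ (fun j _ => (measurable_pi_apply j).const_mul _)

end Aux

theorem cov_logS_p1p2_bivariate_nonpos (C : Matrix (Fin 2) (Fin 2) ℝ)
    (μ : Measure (Fin 2 → ℝ)) (hμ : IsCenteredGaussian C μ) (β : ℝ) (hβ : 0 < β) :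
    covar μ (fun x => Real.log (S β x)) (fun x => p β 0 x * p β 1 x) ≤ 0 := by
  obtain ⟨A, -, hmap⟩ := hμ
  have mA : Measurable A.mulVec := measurable_mulVec A
  haveI : IsProbabilityMeasure μ := by
    rw [hmap]; exact Measure.isProbabilityMeasure_map mA.aemeasurable
  -- symmetry of μ under negation
  have hsymm : μ.map (fun x => -x) = μ := by
    rw [hmap, Measure.map_map measurable_neg mA]
    have hcomp : (fun x : Fin 2 → ℝ => -x) ∘ A.mulVec = A.mulVec ∘ (fun y => -y) := by
      funext y
      simp [Function.comp, Matrix.mulVec_neg]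
    rw [hcomp, ← Measure.map_map mA measurable_neg, std_neg_mp.map_eq, ← hmap]
  -- notation
  set F : (Fin 2 → ℝ) → ℝ := fun x => Real.log (S β x) with hFdef
  set H : (Fin 2 → ℝ) → ℝ := fun x => p β 0 x * p β 1 x with hHdef
  set K : (Fin 2 → ℝ) → ℝ := fun x => (F x + F (-x)) / 2 with hKdef
  set L : (Fin 2 → ℝ) → ℝ := fun x => (F x - F (-x)) / 2 with hLdef
  have hFcont : Continuous F := continuous_logS β
  have hKcont : Continuous K := ((hFcont.add (hFcont.comp continuous_neg)).div_const 2)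
  have hLcont : Continuous L := ((hFcont.sub (hFcont.comp continuous_neg)).div_const 2)
  have hHK : ∀ x, H x = Real.exp (-(2 * K x)) := by
    intro x
    show p β 0 x * p β 1 x = _
    rw [H_eq β x]
    congr 1
    show -(Real.log (S β x) + Real.log (S β (-x))) = -(2 * ((F x + F (-x)) / 2))
    rw [hFdef]
    ring
  have hHcont : Continuous H := by
    have : Continuous fun x => Real.exp (-(2 * K x)) := by fun_prop
    exact (funext hHK : H = _) ▸ this
  have hKnonneg : ∀ x, 0 ≤ K x := by
    intro x
    have h1 : 0 ≤ F x + F (-x) := by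
      show 0 ≤ Real.log (S β x) + Real.log (S β (-x))
      have := Real.log_nonneg (one_le_SS β x)
      rwa [Real.log_mul (S_pos β x).ne' (S_pos β (-x)).ne'] at this
    show 0 ≤ (F x + F (-x)) / 2
    linarith
  have hHpos : ∀ x, 0 < H x := fun x => (hHK x) ▸ Real.exp_pos _
  have hHle1 : ∀ x, H x ≤ 1 := by
    intro x
    rw [hHK x, ← Real.exp_zero]
    apply Real.exp_le_exp.mpr
    have := hKnonneg x
    linarith
  -- integrability of F
  have hFint : Integrable F μ := by
    rw [hmap, integrable_map_measure hFcont.aestronglyMeasurable mA.aemeasurable]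
    have hBint : Integrable
        (fun y : Fin 2 → ℝ => β * (∑ i : Fin 2, ∑ j : Fin 2, |A i j| * |y j|) + Real.log 2)
        (stdGaussian (Fin 2)) := by
      apply Integrable.add ?_ (integrable_const _)
      apply Integrable.const_mul
      apply integrable_finset_sum
      intro i _
      apply integrable_finset_sum
      intro j _
      exact (int_coord (fun t => |t|) measurable_abs int_abs_gauss j).const_mul _
    refine hBint.mono' (hFcont.measurable.comp mA).aestronglyMeasurable
      (ae_of_all _ fun y => ?_)
    have h1 := abs_logS_le hβ (A.mulVec y)
    have h0 : ∀ i : Fin 2, |A.mulVec y i| ≤ ∑ j : Fin 2, |A i j| * |y j| := by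
      intro i
      simp only [Matrix.mulVec, dotProduct]
      refine (Finset.abs_sum_le_sum_abs _ _).trans ?_
      refine Finset.sum_le_sum fun j _ => ?_
      rw [abs_mul]
    have hs : (∑ i : Fin 2, ∑ j : Fin 2, |A i j| * |y j|)
        = (∑ j : Fin 2, |A 0 j| * |y j|) + (∑ j : Fin 2, |A 1 j| * |y j|) := by
      rw [Fin.sum_univ_two]
    rw [Function.comp_apply, Real.norm_eq_abs]
    have hb0 := h0 0
    have hb1 := h0 1
    have hF := abs_logS_le hβ (A.mulVec y)
    rw [hs]
    show |Real.log (S β (A.mulVec y))| ≤ _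
    nlinarith [mul_le_mul_of_nonneg_left hb0 hβ.le, mul_le_mul_of_nonneg_left hb1 hβ.le]
  -- remaining integrability
  have hFneg_int : Integrable (fun x => F (-x)) μ := by
    have h1 : Integrable F (μ.map (fun x => -x)) := by rw [hsymm]; exact hFint
    exact (integrable_map_measure hFcont.aestronglyMeasurable
      measurable_neg.aemeasurable).mp h1
  have hKint : Integrable K μ := (hFint.add hFneg_int).div_const 2
  have hLint : Integrable L μ := (hFint.sub hFneg_int).div_const 2
  have hHint : Integrable H μ :=
    (integrable_const (1:ℝ)).mono' hHcont.aestronglyMeasurable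
      (ae_of_all _ fun x => by
        rw [Real.norm_eq_abs, abs_of_pos (hHpos x)]
        simpa using hHle1 x)
  have habsH : ∀ (G : (Fin 2 → ℝ) → ℝ) (x : Fin 2 → ℝ), ‖G x * H x‖ ≤ |G x| := by
    intro G x
    rw [Real.norm_eq_abs, abs_mul, abs_of_pos (hHpos x)]
    nlinarith [abs_nonneg (G x), hHpos x, hHle1 x]
  have hKH : Integrable (fun x => K x * H x) μ :=
    hKint.abs.mono' (hKcont.mul hHcont).aestronglyMeasurable (ae_of_all _ (habsH K))
  have hLH : Integrable (fun x => L x * H x) μ :=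
    hLint.abs.mono' (hLcont.mul hHcont).aestronglyMeasurable (ae_of_all _ (habsH L))
  -- odd functions integrate to zero
  have hodd : ∀ φ : (Fin 2 → ℝ) → ℝ, Continuous φ → Integrable φ μ →
      (∀ x, φ (-x) = -φ x) → ∫ x, φ x ∂μ = 0 := by
    intro φ hc hi ho
    have h1 : ∫ x, φ x ∂μ = ∫ x, φ (-x) ∂μ := by
      conv_lhs => rw [← hsymm]
      rw [integral_map measurable_neg.aemeasurable hc.aestronglyMeasurable]
    have h2 : ∫ x, φ (-x) ∂μ = -∫ x, φ x ∂μ := by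
      simp_rw [ho]
      exact integral_neg _
    linarith
  have hLodd : ∀ x, L (-x) = -L x := by
    intro x
    show (F (-x) - F (-(-x))) / 2 = -((F x - F (-x)) / 2)
    rw [neg_neg]; ring
  have hKeven : ∀ x, K (-x) = K x := by
    intro x
    show (F (-x) + F (-(-x))) / 2 = (F x + F (-x)) / 2
    rw [neg_neg]; ring
  have hHeven : ∀ x, H (-x) = H x := by
    intro x
    rw [hHK, hHK, hKeven]
  have hintL : ∫ x, L x ∂μ = 0 := hodd L hLcont hLint hLodd
  have hintLH : ∫ x, L x * H x ∂μ = 0 :=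
    hodd _ (hLcont.mul hHcont) hLH (fun x => by rw [hLodd, hHeven]; ring)
  have hFKL : ∀ x, F x = K x + L x := by
    intro x
    show F x = (F x + F (-x)) / 2 + (F x - F (-x)) / 2
    ring
  -- covar F H = covar K H
  have hexpF : expec μ F = expec μ K := by
    show ∫ x, F x ∂μ = ∫ x, K x ∂μ
    simp_rw [hFKL]
    rw [integral_add hKint hLint, hintL, add_zero]
  have hexpFH : expec μ (fun x => F x * H x) = expec μ (fun x => K x * H x) := by
    show ∫ x, F x * H x ∂μ = ∫ x, K x * H x ∂μ
    have e : ∀ x, F x * H x = K x * H x + L x * H x := by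
      intro x; rw [hFKL]; ring
    simp_rw [e]
    rw [integral_add hKH hLH, hintLH, add_zero]
  -- the Chebyshev-type bound
  set m := expec μ K with hm
  set c := Real.exp (-(2 * m)) with hc
  have hkey : covar μ K H = ∫ x, (K x - m) * (H x - c) ∂μ := by
    have e1 : ∀ x, (K x - m) * (H x - c) = (K x * H x - c * K x - m * H x) + m * c := by
      intro x; ring
    simp_rw [e1]
    have i3 : Integrable (fun x => c * K x) μ := hKint.const_mul c
    have i4 : Integrable (fun x => m * H x) μ := hHint.const_mul m
    have i2 : Integrable (fun x => K x * H x - c * K x) μ := hKH.sub i3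
    have i1 : Integrable (fun x => K x * H x - c * K x - m * H x) μ := i2.sub i4
    rw [integral_add i1 (integrable_const _),
      integral_sub i2 i4,
      integral_sub hKH i3,
      integral_const_mul, integral_const_mul, integral_const]
    simp only [measure_univ, probReal_univ, ENNReal.toReal_one, smul_eq_mul, one_mul]
    rw [covar]
    simp only [expec]
    have hmi : (∫ x, K x ∂μ) = m := hm.symm
    rw [hmi]
    ring
  have hpt : ∀ x, (K x - m) * (H x - c) ≤ 0 := by
    intro x
    rcases le_total (K x) m with h | h
    · refine mul_nonpos_iff.mpr (Or.inr ⟨sub_nonpos.mpr h, sub_nonneg.mpr ?_⟩)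
      rw [hHK x, hc]
      exact Real.exp_le_exp.mpr (by linarith)
    · refine mul_nonpos_iff.mpr (Or.inl ⟨sub_nonneg.mpr h, ?_⟩)
      refine sub_nonpos.mpr ?_
      rw [hHK x, hc]
      exact Real.exp_le_exp.mpr (by linarith)
  have hcFH : covar μ F H = covar μ K H := by
    rw [covar, covar, hexpF, hexpFH]
  calc covar μ F H = ∫ x, (K x - m) * (H x - c) ∂μ := by rw [hcFH, hkey]
    _ ≤ 0 := integral_nonpos hpt
end
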